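/- Let β_n = (n+1)^{−b} and γ_n = (n+1)^{−a} with 0.5 < a < b ≤ 1, and for any integer k ≥ 1 set η_n = β_n² γ_n^{−2} ω_n² + (β_n γ_n^{−1})^k + √β_n, where {ω_n} is a positive bounded sequence with ω_n/ω_{n+1} = 1 + o(γ_n). Then η_n/η_{n+1} = 1 + o(γ_n). -/

import Mathlib

open Filter Asymptotics

namespace EtaRatioAux

/-- the comparison sequence -/
noncomputable def gam (a : ℝ) : ℕ → ℝ := fun n => ((n : ℝ) + 1) ^ (-a)

lemma gam_pos (a : ℝ) (n : ℕ) : 0 < gam a n := by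
  unfold gam; positivity

/-- the key ratio property -/
def R (a : ℝ) (f : ℕ → ℝ) : Prop :=
  (fun n => f n / f (n + 1) - 1) =o[atTop] gam a

lemma tendsto_cast : Tendsto (fun n : ℕ => (n : ℝ) + 1) atTop atTop :=
  tendsto_atTop_add_const_right _ _ tendsto_natCast_atTop_atTop

/-- rpow comparison -/
lemma rpow_iso {p q : ℝ} (h : p < q) :
    (fun n : ℕ => ((n : ℝ) + 1) ^ p) =o[atTop] fun n : ℕ => ((n : ℝ) + 1) ^ q := by
  rw [isLittleO_iff_tendsto fun n hn => absurd hn (ne_of_gt (by positivity))]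
  have he : (fun n : ℕ => ((n : ℝ) + 1) ^ p / ((n : ℝ) + 1) ^ q)
      = fun n : ℕ => ((n : ℝ) + 1) ^ (-(q - p)) := by
    funext n
    rw [← Real.rpow_sub (by positivity)]
    ring_nf
  rw [he]
  exact (tendsto_rpow_neg_atTop (by linarith)).comp tendsto_cast

lemma gam_le_one (a : ℝ) (ha : 0 < a) (n : ℕ) : gam a n ≤ 1 := by
  unfold gam
  apply Real.rpow_le_one_of_one_le_of_nonpos
  · have : (0:ℝ) ≤ (n:ℝ) := Nat.cast_nonneg n
    linarith
  · linarith

lemma R_rpow {a : ℝ} (ha : 0 < a) (ha1 : a < 1) (c : ℝ) :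
    R a (fun n => ((n : ℝ) + 1) ^ c) := by
  unfold R
  have hder : HasDerivAt (fun t : ℝ => t ^ c) (c * (1:ℝ) ^ (c - 1)) 1 :=
    Real.hasDerivAt_rpow_const (Or.inl one_ne_zero)
  have hO1 : (fun y : ℝ => y ^ c - (1:ℝ) ^ c) =O[nhds 1] fun y => y - 1 :=
    hder.hasFDerivAt.isBigO_sub
  set x : ℕ → ℝ := fun n => ((n : ℝ) + 1) / ((n : ℝ) + 2) with hxdef
  have hx : Tendsto x atTop (nhds 1) := by
    have h1 : x = fun n : ℕ => 1 - 1 / ((n : ℝ) + 2) := by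
      funext n
      show ((n : ℝ) + 1) / ((n : ℝ) + 2) = 1 - 1 / ((n : ℝ) + 2)
      have h0 : ((n:ℝ) + 2) ≠ 0 := by positivity
      field_simp
      ring
    rw [h1]
    have h2 : Tendsto (fun n : ℕ => 1 / ((n : ℝ) + 2)) atTop (nhds 0) := by
      simp only [one_div]
      exact Tendsto.comp tendsto_inv_atTop_zero
        (tendsto_atTop_add_const_right _ _ tendsto_natCast_atTop_atTop)
    simpa using tendsto_const_nhds.sub h2
  have hO2 : (fun n : ℕ => x n ^ c - 1) =O[atTop] fun n => x n - 1 := by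
    have := hO1.comp_tendsto hx
    simpa [Function.comp_def] using this
  have heq : (fun n : ℕ => ((n : ℝ) + 1) ^ c / (((n + 1 : ℕ) : ℝ) + 1) ^ c - 1)
      = fun n : ℕ => x n ^ c - 1 := by
    funext n
    have h2 : (((n + 1 : ℕ) : ℝ) + 1) = (n : ℝ) + 2 := by push_cast; ring
    show ((n : ℝ) + 1) ^ c / (((n + 1 : ℕ) : ℝ) + 1) ^ c - 1
      = (((n : ℝ) + 1) / ((n : ℝ) + 2)) ^ c - 1
    rw [h2, Real.div_rpow (by positivity) (by positivity)]
  rw [heq]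
  have hO3 : (fun n : ℕ => x n - 1) =O[atTop] fun n : ℕ => ((n : ℝ) + 1) ^ (-1 : ℝ) := by
    apply IsBigO.of_bound 1
    apply Filter.Eventually.of_forall
    intro n
    have h0 : ((n:ℝ) + 2) ≠ 0 := by positivity
    have hxn : x n - 1 = -(1 / ((n:ℝ) + 2)) := by
      show ((n : ℝ) + 1) / ((n : ℝ) + 2) - 1 = -(1 / ((n:ℝ) + 2))
      field_simp
      norm_num
    rw [hxn, Real.rpow_neg_one]
    have h1 : (0:ℝ) < (n:ℝ) + 1 := by positivity
    have h2 : (0:ℝ) < (n:ℝ) + 2 := by positivity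
    rw [Real.norm_eq_abs, Real.norm_eq_abs, abs_neg, abs_of_nonneg (by positivity),
      abs_of_nonneg (by positivity)]
    rw [one_mul, one_div]
    exact inv_anti₀ h1 (by linarith)
  exact (hO2.trans hO3).trans_isLittleO (rpow_iso (by linarith))

lemma R_mul {a : ℝ} (ha : 0 < a) {f g : ℕ → ℝ} (hf : ∀ n, 0 < f n) (hg : ∀ n, 0 < g n)
    (Hf : R a f) (Hg : R a g) : R a (fun n => f n * g n) := by
  unfold R at *
  have heq : (fun n => f n * g n / (f (n + 1) * g (n + 1)) - 1)
      = fun n => (f n / f (n + 1) - 1) + (g n / g (n + 1) - 1)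
        + (f n / f (n + 1) - 1) * (g n / g (n + 1) - 1) := by
    funext n
    have h1 : f (n + 1) ≠ 0 := ne_of_gt (hf _)
    have h2 : g (n + 1) ≠ 0 := ne_of_gt (hg _)
    field_simp
    ring
  rw [heq]
  have hgg : (fun n => gam a n * gam a n) =O[atTop] gam a := by
    apply IsBigO.of_bound 1
    apply Filter.Eventually.of_forall
    intro n
    have h1 := gam_pos a n
    have h2 := gam_le_one a ha n
    rw [Real.norm_eq_abs, Real.norm_eq_abs, abs_of_pos (mul_pos h1 h1), abs_of_pos h1, one_mul]
    nlinarith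
  exact (Hf.add Hg).add ((Hf.mul Hg).trans_isBigO hgg)

lemma R_pow {a : ℝ} (ha : 0 < a) {f : ℕ → ℝ} (hf : ∀ n, 0 < f n) (Hf : R a f) (m : ℕ) :
    R a (fun n => f n ^ m) := by
  induction m with
  | zero =>
    unfold R
    have : (fun n : ℕ => f n ^ 0 / f (n + 1) ^ 0 - 1) = fun _ => (0:ℝ) := by
      funext n; simp
    rw [this]
    exact isLittleO_zero _ _
  | succ m ih =>
    have : (fun n => f n ^ (m + 1)) = fun n => f n ^ m * f n := by
      funext n; ring
    rw [this]
    exact R_mul ha (fun n => pow_pos (hf n) m) hf ih Hf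

lemma R_sqrt {a : ℝ} {f : ℕ → ℝ} (hf : ∀ n, 0 < f n) (Hf : R a f) :
    R a (fun n => Real.sqrt (f n)) := by
  unfold R at *
  apply IsBigO.trans_isLittleO _ Hf
  apply IsBigO.of_bound 1
  apply Filter.Eventually.of_forall
  intro n
  set u := f n / f (n + 1) - 1 with hu
  have hupos : 0 < 1 + u := by
    rw [hu]
    have := div_pos (hf n) (hf (n + 1))
    linarith
  have hsq : Real.sqrt (f n) / Real.sqrt (f (n + 1)) = Real.sqrt (1 + u) := by
    rw [← Real.sqrt_div (le_of_lt (hf n)), hu]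
    congr 1
    ring
  rw [hsq, one_mul, Real.norm_eq_abs, Real.norm_eq_abs]
  set s := Real.sqrt (1 + u) with hs
  have hs0 : 0 ≤ s := Real.sqrt_nonneg _
  have hss : s ^ 2 = 1 + u := Real.sq_sqrt (le_of_lt hupos)
  have hkey : (s - 1) * (s + 1) = u := by nlinarith
  have h1 : |s - 1| * (s + 1) = |u| := by
    rw [← hkey, abs_mul, abs_of_nonneg (show (0:ℝ) ≤ s + 1 by linarith)]
  calc |s - 1| = |s - 1| * 1 := by ring
    _ ≤ |s - 1| * (s + 1) := by
        apply mul_le_mul_of_nonneg_left (by linarith) (abs_nonneg _)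
    _ = |u| := h1

lemma R_add {a : ℝ} {f g : ℕ → ℝ} (hf : ∀ n, 0 < f n) (hg : ∀ n, 0 < g n)
    (Hf : R a f) (Hg : R a g) : R a (fun n => f n + g n) := by
  unfold R at *
  have hbound : (fun n => (f n + g n) / (f (n + 1) + g (n + 1)) - 1)
      =O[atTop] fun n => ‖f n / f (n + 1) - 1‖ + ‖g n / g (n + 1) - 1‖ := by
    apply IsBigO.of_bound 1
    apply Filter.Eventually.of_forall
    intro n
    set u := f n / f (n + 1) - 1 with hudef
    set v := g n / g (n + 1) - 1 with hvdef
    have hf1 := hf (n + 1)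
    have hg1 := hg (n + 1)
    have hfu : f n = (1 + u) * f (n + 1) := by
      rw [hudef]; field_simp; ring
    have hgv : g n = (1 + v) * g (n + 1) := by
      rw [hvdef]; field_simp; ring
    have hfg : (f n + g n) / (f (n + 1) + g (n + 1)) - 1
        = (u * f (n + 1) + v * g (n + 1)) / (f (n + 1) + g (n + 1)) := by
      rw [hfu, hgv]
      field_simp
      ring
    rw [hfg]
    simp only [Real.norm_eq_abs, one_mul]
    have hden : 0 < f (n + 1) + g (n + 1) := by linarith
    rw [abs_div, abs_of_pos hden, div_le_iff₀ hden]
    have h1 : |u * f (n + 1) + v * g (n + 1)| ≤ |u| * f (n + 1) + |v| * g (n + 1) := by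
      calc |u * f (n + 1) + v * g (n + 1)| ≤ |u * f (n + 1)| + |v * g (n + 1)| := abs_add_le _ _
        _ = |u| * f (n + 1) + |v| * g (n + 1) := by
            rw [abs_mul, abs_mul, abs_of_pos hf1, abs_of_pos hg1]
    have h2 : |u| * f (n + 1) + |v| * g (n + 1)
        ≤ (|u| + |v|) * (f (n + 1) + g (n + 1)) := by nlinarith [abs_nonneg u, abs_nonneg v]
    have h3 : |(|u| + |v|)| = |u| + |v| := abs_of_nonneg (by positivity)
    rw [h3]
    linarith
  exact hbound.trans_isLittleO (Hf.norm_left.add Hg.norm_left)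

end EtaRatioAux

open EtaRatioAux in
/-- With `β_n = (n+1)^{-b}`, `γ_n = (n+1)^{-a}`, `1/2 < a < b ≤ 1`, a positive bounded
sequence `ω_n` with `ω_n/ω_{n+1} = 1 + o(γ_n)`, and any integer `k ≥ 1`, the sequence
`η_n = β_n² γ_n^{-2} ω_n² + (β_n γ_n^{-1})^k + √β_n` also satisfies
`η_n/η_{n+1} = 1 + o(γ_n)`. -/
theorem eta_ratio_asymptotics (a b : ℝ) (ha : 1 / 2 < a) (hab : a < b) (hb : b ≤ 1)
    (ω : ℕ → ℝ) (hωpos : ∀ n, 0 < ω n) (hωbdd : BddAbove (Set.range ω))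
    (hω : (fun n => ω n / ω (n + 1) - 1) =o[atTop] fun n : ℕ => ((n + 1 : ℝ)) ^ (-a))
    (k : ℕ) (hk : 1 ≤ k) :
    (fun n : ℕ =>
        ((((n + 1 : ℝ)) ^ (-b)) ^ 2 * ((((n + 1 : ℝ)) ^ (-a))⁻¹) ^ 2 * ω n ^ 2
          + (((n + 1 : ℝ)) ^ (-b) * (((n + 1 : ℝ)) ^ (-a))⁻¹) ^ k
          + Real.sqrt (((n + 1 : ℝ)) ^ (-b))) /
        ((((n + 2 : ℝ)) ^ (-b)) ^ 2 * ((((n + 2 : ℝ)) ^ (-a))⁻¹) ^ 2 * ω (n + 1) ^ 2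
          + (((n + 2 : ℝ)) ^ (-b) * (((n + 2 : ℝ)) ^ (-a))⁻¹) ^ k
          + Real.sqrt (((n + 2 : ℝ)) ^ (-b))) - 1)
      =o[atTop] fun n : ℕ => ((n + 1 : ℝ)) ^ (-a) := by
  have ha0 : 0 < a := by linarith
  have ha1 : a < 1 := by linarith
  set T : ℕ → ℝ := fun n =>
    ((((n : ℝ) + 1) ^ (-b)) ^ 2 * (((n : ℝ) + 1) ^ a) ^ 2 * ω n ^ 2
      + (((n : ℝ) + 1) ^ (-b) * ((n : ℝ) + 1) ^ a) ^ k
      + Real.sqrt (((n : ℝ) + 1) ^ (-b))) with hTdef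
  have hinv : ∀ x : ℝ, 0 < x → (x ^ (-a))⁻¹ = x ^ a := fun x hx => by
    rw [Real.rpow_neg hx.le, inv_inv]
  have hgoal : (fun n : ℕ =>
        ((((n + 1 : ℝ)) ^ (-b)) ^ 2 * ((((n + 1 : ℝ)) ^ (-a))⁻¹) ^ 2 * ω n ^ 2
          + (((n + 1 : ℝ)) ^ (-b) * (((n + 1 : ℝ)) ^ (-a))⁻¹) ^ k
          + Real.sqrt (((n + 1 : ℝ)) ^ (-b))) /
        ((((n + 2 : ℝ)) ^ (-b)) ^ 2 * ((((n + 2 : ℝ)) ^ (-a))⁻¹) ^ 2 * ω (n + 1) ^ 2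
          + (((n + 2 : ℝ)) ^ (-b) * (((n + 2 : ℝ)) ^ (-a))⁻¹) ^ k
          + Real.sqrt (((n + 2 : ℝ)) ^ (-b))) - 1)
      = fun n => T n / T (n + 1) - 1 := by
    funext n
    have e1 := hinv ((n : ℝ) + 1) (by positivity)
    have e2 := hinv ((n : ℝ) + 2) (by positivity)
    have e3 : (((n + 1 : ℕ) : ℝ) + 1) = (n : ℝ) + 2 := by push_cast; ring
    simp only [hTdef, e1, e2, e3]
  rw [hgoal]
  have hR : R a T := by
    rw [hTdef]
    apply R_add
    · intro n; positivity
    · intro n; exact Real.sqrt_pos.mpr (by positivity)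
    · apply R_add
      · intro n
        exact mul_pos (mul_pos (by positivity) (by positivity)) (pow_pos (hωpos n) 2)
      · intro n; positivity
      · apply R_mul ha0
        · intro n; positivity
        · intro n; exact pow_pos (hωpos n) 2
        · apply R_mul ha0
          · intro n; positivity
          · intro n; positivity
          · exact R_pow ha0 (fun n => by positivity) (R_rpow ha0 ha1 (-b)) 2
          · exact R_pow ha0 (fun n => by positivity) (R_rpow ha0 ha1 a) 2
        · exact R_pow ha0 hωpos hω 2
      · apply R_pow ha0 (fun n => by positivity)
        apply R_mul ha0 (fun n => by positivity) (fun n => by positivity)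
          (R_rpow ha0 ha1 (-b)) (R_rpow ha0 ha1 a)
    · exact R_sqrt (fun n => by positivity) (R_rpow ha0 ha1 (-b))
  exact hR
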